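/- If n is a positive integer with n not ≡ 0 mod 4, then the natural map i_*: H_*^{Z/2}(Z/n;Z) → H_*(Z/n;Z)^{Z/2} is an isomorphism, where Z/2 acts on Z/n by x ↦ -x. -/

import Mathlib

namespace IGC

noncomputable section
set_option linter.unusedSectionVars false

/-- The group of `n`-chains of the bar complex of `G` with coefficients in `A`
(trivial `G`-action): the free `A`-module on `n`-tuples of elements of `G`. -/
abbrev C (G : Type*) [Group G] (A : Type*) [AddCommGroup A] (n : ℕ) : Type _ :=
  (Fin n → G) →₀ A

/-- The `i`-th face of a bar symbol `[g_1|⋯|g_{n+1}]`. -/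
def barFace {G : Type*} [Group G] {n : ℕ} (i : Fin (n + 2)) (g : Fin (n + 1) → G) :
    Fin n → G := fun j =>
  if (j : ℕ) + 1 < (i : ℕ) then g j.castSucc
  else if (j : ℕ) + 1 = (i : ℕ) then g j.castSucc * g j.succ
  else g j.succ

/-- The boundary map of the bar complex. -/
def barD (G : Type*) [Group G] (A : Type*) [AddCommGroup A] (n : ℕ) :
    C G A (n + 1) →+ C G A n :=
  Finsupp.liftAddHom fun g =>
    { toFun := fun a => ∑ i : Fin (n + 2), Finsupp.single (barFace i g) (((-1 : ℤ) ^ (i : ℕ)) • a)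
      map_zero' := by simp
      map_add' := fun a b => by
        simp [smul_add, Finsupp.single_add, Finset.sum_add_distrib] }

lemma barD_single {G : Type*} [Group G] {A : Type*} [AddCommGroup A] (n : ℕ)
    (g : Fin (n + 1) → G) (a : A) :
    barD G A n (Finsupp.single g a) =
      ∑ i : Fin (n + 2), Finsupp.single (barFace i g) (((-1 : ℤ) ^ (i : ℕ)) • a) := by
  rw [barD, Finsupp.liftAddHom_apply_single]; rfl

/-- The boundary map out of degree `n` (the zero map for `n = 0`). -/
def barDFrom (G : Type*) [Group G] (A : Type*) [AddCommGroup A] :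
    (n : ℕ) → C G A n →+ C G A (n - 1)
  | 0 => 0
  | n + 1 => barD G A n

/-- The chain map on bar complexes induced by a group homomorphism. -/
def chainMapOf (G : Type*) [Group G] (A : Type*) [AddCommGroup A] {H : Type*} [Group H]
    (φ : H →* G) (n : ℕ) : C H A n →+ C G A n :=
  Finsupp.mapDomain.addMonoidHom fun g j => φ (g j)

lemma chainMapOf_single (G : Type*) [Group G] (A : Type*) [AddCommGroup A] {H : Type*} [Group H]
    (φ : H →* G) (n : ℕ) (g : Fin n → H) (a : A) :
    chainMapOf G A φ n (Finsupp.single g a) = Finsupp.single (fun j => φ (g j)) a := by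
  rw [chainMapOf, Finsupp.mapDomain.addMonoidHom_apply, Finsupp.mapDomain_single]

lemma barFace_comp {G : Type*} [Group G] {H : Type*} [Group H] (φ : H →* G) {n : ℕ}
    (i : Fin (n + 2)) (g : Fin (n + 1) → H) :
    (barFace i fun j => φ (g j)) = fun j => φ (barFace i g j) := by
  funext j
  unfold barFace
  split_ifs <;> simp

lemma chainMapOf_barD (G : Type*) [Group G] (A : Type*) [AddCommGroup A] {H : Type*} [Group H]
    (φ : H →* G) (n : ℕ) :
    (barD G A n).comp (chainMapOf G A φ (n + 1)) = (chainMapOf G A φ n).comp (barD H A n) := by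
  apply Finsupp.addHom_ext
  intro g a
  rw [AddMonoidHom.comp_apply, AddMonoidHom.comp_apply, chainMapOf_single, barD_single,
    barD_single, map_sum]
  refine Finset.sum_congr rfl fun i _ => ?_
  rw [chainMapOf_single, barFace_comp]

lemma chainMapOf_comp (G : Type*) [Group G] (A : Type*) [AddCommGroup A]
    {H K : Type*} [Group H] [Group K] (ψ : H →* G) (φ : K →* H) (n : ℕ) :
    (chainMapOf G A ψ n).comp (chainMapOf H A φ n) = chainMapOf G A (ψ.comp φ) n := by
  apply Finsupp.addHom_ext
  intro g a
  rw [AddMonoidHom.comp_apply, chainMapOf_single, chainMapOf_single, chainMapOf_single]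
  rfl

section Action

variable (G : Type*) [Group G] (A : Type*) [AddCommGroup A]
variable (Q : Type*) [Group Q] [Fintype Q] [MulDistribMulAction Q G]

/-- The action of `q : Q` on bar chains. -/
def qMap (q : Q) (n : ℕ) : C G A n →+ C G A n :=
  chainMapOf G A (MulDistribMulAction.toMonoidHom G q) n

/-- The subgroup of `Q`-fixed elements of `G`. -/
def fixedSubgroup : Subgroup G where
  carrier := {g | ∀ q : Q, q • g = g}
  one_mem' := fun q => smul_one q
  mul_mem' := fun ha hb q => by rw [smul_mul', ha q, hb q]
  inv_mem' := fun ha q => by rw [smul_inv', ha q]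

/-- The subcomplex of `Q`-invariant bar chains. -/
def invC (n : ℕ) : AddSubgroup (C G A n) :=
  ⨅ q : Q, (qMap G A Q q n - AddMonoidHom.id (C G A n)).ker

/-- Cycles of the bar complex. -/
def cycles (n : ℕ) : AddSubgroup (C G A n) := (barDFrom G A n).ker

/-- Boundaries of the bar complex. -/
def boundaries (n : ℕ) : AddSubgroup (C G A n) := (barD G A n).range

/-- The group homology `H_n(G;A)` (with trivial action on `A`), computed from the bar complex. -/
abbrev barHomology (n : ℕ) : Type _ :=
  cycles G A n ⧸ (boundaries G A n).addSubgroupOf (cycles G A n)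

/-- `Q`-invariant cycles. -/
def invCycles (n : ℕ) : AddSubgroup (C G A n) := invC G A Q n ⊓ cycles G A n

/-- Boundaries of `Q`-invariant chains. -/
def invBoundaries (n : ℕ) : AddSubgroup (C G A n) := (invC G A Q (n + 1)).map (barD G A n)

/-- `H_n^Q(G;A)`: the homology of the subcomplex of `Q`-invariant bar chains. -/
abbrev invHomology (n : ℕ) : Type _ :=
  invCycles G A Q n ⧸ (invBoundaries G A Q n).addSubgroupOf (invCycles G A Q n)

/-- The map `i_* : H_n^Q(G;A) → H_n(G;A)` induced by the inclusion of complexes. -/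
def inclHom (n : ℕ) : invHomology G A Q n →+ barHomology G A n :=
  QuotientAddGroup.map _ _ (AddSubgroup.inclusion (show invCycles G A Q n ≤ cycles G A n from inf_le_right)) (by
    intro x hx
    rw [AddSubgroup.mem_addSubgroupOf] at hx
    rw [AddSubgroup.mem_comap, AddSubgroup.mem_addSubgroupOf, AddSubgroup.coe_inclusion]
    obtain ⟨y, -, hy⟩ := hx
    exact ⟨y, hy⟩)

/-- The subgroup `H_n(G;A)^Q` of `Q`-invariant homology classes. -/
def invariantClasses (n : ℕ) : AddSubgroup (barHomology G A n) :=
  ((⨅ q : Q, (boundaries G A n).comap (qMap G A Q q n - AddMonoidHom.id (C G A n))).addSubgroupOf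
    (cycles G A n)).map
      (QuotientAddGroup.mk' ((boundaries G A n).addSubgroupOf (cycles G A n)))

lemma chainMapOf_fixed_mem_invC (n : ℕ) (c : C (fixedSubgroup G Q) A n) :
    chainMapOf G A (fixedSubgroup G Q).subtype n c ∈ invC G A Q n := by
  have key : ∀ q : Q, (qMap G A Q q n).comp (chainMapOf G A (fixedSubgroup G Q).subtype n)
      = chainMapOf G A (fixedSubgroup G Q).subtype n := by
    intro q
    rw [qMap, chainMapOf_comp]
    congr 1
    ext x
    exact x.2 q
  rw [invC, AddSubgroup.mem_iInf]
  intro q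
  rw [AddMonoidHom.mem_ker, AddMonoidHom.sub_apply, sub_eq_zero, AddMonoidHom.id_apply,
    ← AddMonoidHom.comp_apply, key q]


lemma chainMapOf_barDFrom (n : ℕ) (c : C (fixedSubgroup G Q) A n) :
    barDFrom G A n (chainMapOf G A (fixedSubgroup G Q).subtype n c)
      = chainMapOf G A (fixedSubgroup G Q).subtype (n - 1)
          (barDFrom (fixedSubgroup G Q) A n c) := by
  match n with
  | 0 => simp [barDFrom]
  | n + 1 =>
      show (barD G A n) (chainMapOf G A (fixedSubgroup G Q).subtype (n + 1) c) = _
      rw [← AddMonoidHom.comp_apply, chainMapOf_barD]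
      rfl

/-- The map `H_n(G^Q;A) → H_n^Q(G;A)` induced by the inclusion of complexes. -/
def subIncl (n : ℕ) : barHomology (fixedSubgroup G Q) A n →+ invHomology G A Q n :=
  QuotientAddGroup.map _ _
    (((chainMapOf G A (fixedSubgroup G Q).subtype n).comp
        (cycles (fixedSubgroup G Q) A n).subtype).codRestrict (invCycles G A Q n) (by
      intro x
      rw [invCycles, AddSubgroup.mem_inf]
      refine ⟨chainMapOf_fixed_mem_invC G A Q n _, AddMonoidHom.mem_ker.mpr ?_⟩
      rw [AddMonoidHom.comp_apply, AddSubgroup.coe_subtype, chainMapOf_barDFrom,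
        AddMonoidHom.mem_ker.mp x.2, map_zero]))
    (by
      intro x hx
      rw [AddSubgroup.mem_addSubgroupOf] at hx
      obtain ⟨σ, hσ⟩ := hx
      rw [AddSubgroup.mem_comap, AddSubgroup.mem_addSubgroupOf]
      show ((chainMapOf G A (fixedSubgroup G Q).subtype n).comp
        (cycles (fixedSubgroup G Q) A n).subtype) x ∈ invBoundaries G A Q n
      rw [AddMonoidHom.comp_apply, AddSubgroup.coe_subtype, ← hσ, ← AddMonoidHom.comp_apply,
        ← chainMapOf_barD]
      exact ⟨chainMapOf G A (fixedSubgroup G Q).subtype (n + 1) σ,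
        chainMapOf_fixed_mem_invC G A Q (n + 1) σ, rfl⟩)

/-- The subgroup generated by differences `q • c - c`, i.e. the kernel of the map
to the coinvariants (the cellular chains of the quotient space `BG/Q`). -/
def W (n : ℕ) : AddSubgroup (C G A n) :=
  ⨆ q : Q, (qMap G A Q q n - AddMonoidHom.id (C G A n)).range

/-- Cycles of the coinvariants complex (the cellular chain complex of `BG/Q`),
presented as chains whose boundary lies in `W`. -/
def quotCycles (n : ℕ) : AddSubgroup (C G A n) := (W G A Q (n - 1)).comap (barDFrom G A n)

/-- Boundaries of the coinvariants complex, presented in `C_n(G;A)`. -/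
def quotBoundaries (n : ℕ) : AddSubgroup (C G A n) := W G A Q n ⊔ (barD G A n).range

/-- `H_n(BG/Q;A)`: the homology of the coinvariants complex, i.e. of the
cellular chain complex of the quotient CW-complex `BG/Q`. -/
abbrev quotHomology (n : ℕ) : Type _ :=
  quotCycles G A Q n ⧸ (quotBoundaries G A Q n).addSubgroupOf (quotCycles G A Q n)

/-- The image of the norm map `N : C_n(BG/Q) → C_n(G)^Q` sending the class of a
bar symbol to the sum over its `Q`-orbit. -/
def normImage (n : ℕ) : AddSubgroup (C G ℤ n) :=
  letI := Classical.decEq (Fin n → G)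
  AddSubgroup.closure {c | ∃ g : Fin n → G,
    c = ∑ x ∈ Finset.image (fun q : Q => fun j => q • g j) Finset.univ, Finsupp.single x (1 : ℤ)}

/-- The degree-`n` part of the cokernel `D_• = C_•(G)^Q / N(C_•(BG/Q))` of the norm map. -/
abbrev DChains (n : ℕ) : Type _ :=
  invC G ℤ Q n ⧸ (normImage G Q n).addSubgroupOf (invC G ℤ Q n)

/-- Cycles of the quotient complex `D_•`. -/
def DCycles (n : ℕ) : AddSubgroup (C G ℤ n) :=
  invC G ℤ Q n ⊓ (normImage G Q (n - 1)).comap (barDFrom G ℤ n)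

/-- Boundaries of the quotient complex `D_•`. -/
def DBoundaries (n : ℕ) : AddSubgroup (C G ℤ n) :=
  normImage G Q n ⊔ (invC G ℤ Q (n + 1)).map (barD G ℤ n)

/-- `h_n(D_•)`: the homology of the cokernel of the norm map. -/
abbrev DHomology (n : ℕ) : Type _ :=
  DCycles G Q n ⧸ (DBoundaries G Q n).addSubgroupOf (DCycles G Q n)

/-- Cellular cochains of `BG/Q` with `ℤ/2` coefficients: homomorphisms on chains. -/
abbrev Cochain (n : ℕ) : Type _ := C G ℤ n →+ ZMod 2

/-- Cochains vanishing on a subgroup of chains. -/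
def vanishing (n : ℕ) (S : AddSubgroup (C G ℤ n)) : AddSubgroup (Cochain G n) where
  carrier := {f | ∀ c ∈ S, f c = 0}
  zero_mem' := fun c _ => rfl
  add_mem' := fun hf hg c hc => by
    rw [AddMonoidHom.add_apply, hf c hc, hg c hc, add_zero]
  neg_mem' := fun hf c hc => by
    rw [AddMonoidHom.neg_apply, hf c hc, neg_zero]

/-- Precomposition with a boundary map as the coboundary operator. -/
def precomp {n m : ℕ} (d : C G ℤ m →+ C G ℤ n) : Cochain G n →+ Cochain G m :=
  AddMonoidHom.mk' (fun f => f.comp d) (fun f g => by ext c; simp)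

/-- Cocycles of the `ℤ/2`-cochain complex of `BG/Q`. -/
def quotCocycles (q : ℕ) : AddSubgroup (Cochain G q) :=
  vanishing G q (W G ℤ Q q) ⊓ (precomp G (barD G ℤ q)).ker

/-- Coboundaries of the `ℤ/2`-cochain complex of `BG/Q`. -/
def quotCoboundaries (q : ℕ) : AddSubgroup (Cochain G q) :=
  (vanishing G (q - 1) (W G ℤ Q (q - 1))).map (precomp G (barDFrom G ℤ q))

/-- `H^q(BG/Q; ℤ/2)`: the cellular cohomology of the quotient space with `ℤ/2` coefficients. -/
abbrev quotCohomology (q : ℕ) : Type _ :=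
  quotCocycles G Q q ⧸ (quotCoboundaries G Q q).addSubgroupOf (quotCocycles G Q q)

end Action

/-- The action of `ℤˣ ≅ ℤ/2` on a commutative group by inversion (negation):
the nontrivial element acts by `g ↦ g⁻¹`. -/
instance negAction (Γ : Type*) [CommGroup Γ] : MulDistribMulAction ℤˣ Γ where
  smul u g := g ^ (u : ℤ)
  one_smul g := by show g ^ ((1 : ℤˣ) : ℤ) = g; simp
  mul_smul u v g := by
    show g ^ ((↑(u * v) : ℤ)) = (g ^ (v : ℤ)) ^ (u : ℤ)
    rw [Units.val_mul, mul_comm, zpow_mul]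
  smul_mul u a b := mul_zpow a b (u : ℤ)
  smul_one u := one_zpow _

end
end IGC

namespace IGCAux
open Finsupp

noncomputable section
set_option linter.unusedSectionVars false

variable {G : Type*} [CommGroup G] [DecidableEq G]

/-- Free abelian group on words. -/
abbrev A (G : Type*) := List G →₀ ℤ

/-- Lift a word-function to an additive hom. -/
def wlift (f : List G → A G) : A G →+ A G :=
  Finsupp.liftAddHom fun w => zmultiplesHom _ (f w)

@[simp] lemma wlift_single (f : List G → A G) (w : List G) (c : ℤ) :
    wlift f (Finsupp.single w c) = c • f w := by
  rw [wlift, Finsupp.liftAddHom_apply_single]; rfl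

/-- Cons a fixed element to every word. -/
def consH (a : G) : A G →+ A G := wlift fun w => Finsupp.single (a :: w) 1

@[simp] lemma consH_single (a : G) (w : List G) (c : ℤ) :
    consH a (Finsupp.single w c) = Finsupp.single (a :: w) c := by
  simp [consH, Finsupp.smul_single]

/-- Map inversion over every word. -/
def invW : A G →+ A G := wlift fun w => Finsupp.single (w.map (·⁻¹)) 1

@[simp] lemma invW_single (w : List G) (c : ℤ) :
    invW (Finsupp.single w c) = Finsupp.single (w.map (·⁻¹)) c := by
  simp [invW, Finsupp.smul_single]

/-- Tail of every word. -/
def tailW : A G →+ A G := wlift fun w => Finsupp.single w.tail 1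

@[simp] lemma tailW_single (w : List G) (c : ℤ) :
    tailW (Finsupp.single w c) = Finsupp.single w.tail c := by
  simp [tailW, Finsupp.smul_single]

/-- Multiply the head of a word by `a`. -/
def mulHead (a : G) : List G → List G
  | [] => []
  | b :: t => (a * b) :: t

def mheadW (a : G) : A G →+ A G := wlift fun w => Finsupp.single (mulHead a w) 1

@[simp] lemma mheadW_single (a : G) (w : List G) (c : ℤ) :
    mheadW a (Finsupp.single w c) = Finsupp.single (mulHead a w) c := by
  simp [mheadW, Finsupp.smul_single]

lemma invW_consH (a : G) (z : A G) : invW (consH a z) = consH a⁻¹ (invW z) := by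
  induction z using Finsupp.induction with
  | zero => simp
  | single_add w c f _ _ ih => simp only [map_add, ih, consH_single, invW_single, List.map_cons]

lemma tailW_consH (a : G) (z : A G) : tailW (consH a z) = z := by
  induction z using Finsupp.induction with
  | zero => simp
  | single_add w c f _ _ ih => simp only [map_add, ih, consH_single, tailW_single, List.tail_cons]

lemma mheadW_consH (a b : G) (z : A G) : mheadW a (consH b z) = consH (a * b) z := by
  induction z using Finsupp.induction with
  | zero => simp
  | single_add w c f _ _ ih => simp only [map_add, ih, consH_single, mheadW_single, mulHead]

section HS
variable (HS : Finset G)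

/-- Sum of cons over the coset `a • HS`. -/
def cosetC (a : G) : A G →+ A G := ∑ h ∈ HS, consH (a * h)

/-- Sum of cons over `HS`. -/
def nconsH : A G →+ A G := ∑ h ∈ HS, consH h

lemma cosetC_apply (a : G) (z : A G) : cosetC HS a z = ∑ h ∈ HS, consH (a * h) z := by
  simp [cosetC]

lemma nconsH_apply (z : A G) : nconsH HS z = ∑ h ∈ HS, consH h z := by
  simp [nconsH]

/-- The differential of the (reversed) bar complex, on words. -/
def Dw : List G → A G
  | [] => 0
  | [_] => 0
  | a :: b :: t => consH a (Dw (b :: t)) +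
      ((-1 : ℤ) ^ (t.length + 1)) •
        (Finsupp.single ((a * b) :: t) 1 - Finsupp.single (b :: t) 1 -
          Finsupp.single (a :: t) 1)

@[simp] lemma Dw_nil : Dw ([] : List G) = 0 := rfl
@[simp] lemma Dw_singleton (a : G) : Dw [a] = 0 := rfl

/-- The differential as an additive hom. -/
def dW : A G →+ A G := wlift Dw

@[simp] lemma dW_single (w : List G) (c : ℤ) : dW (Finsupp.single w c) = c • Dw w := by
  simp [dW]

lemma Dw_cons (a : G) (w : List G) (hw : w ≠ []) :
    Dw (a :: w) = consH a (Dw w) +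
      ((-1 : ℤ) ^ w.length) •
        (Finsupp.single (mulHead a w) 1 - Finsupp.single w 1 -
          Finsupp.single (a :: w.tail) 1) := by
  match w with
  | [] => exact absurd rfl hw
  | b :: t => rfl

/-- Full coset smearing of a word. -/
def Lw : List G → A G
  | [] => Finsupp.single [] 1
  | a :: t => cosetC HS a (Lw t)

/-- The telescoping homotopy. -/
def Sw : List G → A G
  | [] => - nconsH HS (Finsupp.single [] 1)
  | a :: t => ((-1 : ℤ) ^ t.length * (HS.card : ℤ) ^ (t.length + 1)) •
        nconsH HS (Finsupp.single (a :: t) 1) + cosetC HS a (Sw t)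

def lW : A G →+ A G := wlift (Lw HS)
def sW : A G →+ A G := wlift (Sw HS)

@[simp] lemma lW_single (w : List G) (c : ℤ) : lW HS (Finsupp.single w c) = c • Lw HS w := by
  simp [lW]
@[simp] lemma sW_single (w : List G) (c : ℤ) : sW HS (Finsupp.single w c) = c • Sw HS w := by
  simp [sW]

/-- Homogeneous elements of degree `k`. -/
def Hmg (k : ℕ) : AddSubgroup (A G) where
  carrier := {z | ∀ w ∈ z.support, w.length = k}
  zero_mem' := by simp
  add_mem' := by
    intro x y hx hy w hw
    rcases Finset.mem_union.mp (Finsupp.support_add hw) with h | h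
    exacts [hx w h, hy w h]
  neg_mem' := by intro x hx w hw; exact hx w (by simpa using hw)

lemma mem_Hmg {k : ℕ} {z : A G} : z ∈ Hmg (G := G) k ↔ ∀ w ∈ z.support, w.length = k :=
  Iff.rfl

lemma single_mem_Hmg (w : List G) (c : ℤ) : Finsupp.single w c ∈ Hmg (G := G) w.length := by
  rw [mem_Hmg]; intro v hv
  have := Finsupp.support_single_subset hv
  simp at this; subst this; rfl

lemma single_mem_Hmg' {k : ℕ} (w : List G) (c : ℤ) (h : w.length = k) :
    Finsupp.single w c ∈ Hmg (G := G) k := h ▸ single_mem_Hmg w c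

lemma smul_mem_Hmg {k : ℕ} (c : ℤ) {z : A G} (hz : z ∈ Hmg k) : c • z ∈ Hmg k := by
  rw [mem_Hmg] at *; intro w hw; exact hz w (Finsupp.support_smul hw)

/-- Two additive homs agreeing on degree-`k` singles agree on `Hmg k`. -/
lemma eq_on_Hmg {B : Type*} [AddCommGroup B] {F₁ F₂ : A G →+ B} {k : ℕ}
    (h : ∀ w : List G, w.length = k → F₁ (Finsupp.single w 1) = F₂ (Finsupp.single w 1)) :
    ∀ z ∈ Hmg (G := G) k, F₁ z = F₂ z := by
  intro z hz
  induction z using Finsupp.induction with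
  | zero => simp
  | single_add w c f hwf _ ih =>
    have hsupp : (Finsupp.single w c + f).support = {w} ∪ f.support ∨ c = 0 := by
      by_cases hc : c = 0
      · right; exact hc
      · left
        rw [Finsupp.support_add_eq, Finsupp.support_single_ne_zero _ hc]
        rw [Finsupp.support_single_ne_zero _ hc]; simpa using hwf
    rw [mem_Hmg] at hz
    rcases hsupp with hs | hc
    · have hwk : w.length = k := hz w (by rw [hs]; simp)
      have hf : f ∈ Hmg (G := G) k := mem_Hmg.mpr fun v hv => hz v (by rw [hs]; simp [hv])
      have h1 : F₁ (Finsupp.single w c) = F₂ (Finsupp.single w c) := by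
        have := h w hwk
        calc F₁ (Finsupp.single w c) = c • F₁ (Finsupp.single w 1) := by
              rw [← map_zsmul]; congr 1; simp [Finsupp.smul_single]
          _ = c • F₂ (Finsupp.single w 1) := by rw [this]
          _ = F₂ (Finsupp.single w c) := by rw [← map_zsmul]; congr 1; simp [Finsupp.smul_single]
      rw [map_add, map_add, h1, ih hf]
    · subst hc
      simp only [Finsupp.single_zero, zero_add] at *
      exact ih (mem_Hmg.mpr hz)

lemma mem_Hmg_of_support {k : ℕ} {z : A G} (h : ∀ w ∈ z.support, w.length = k) :
    z ∈ Hmg (G := G) k := mem_Hmg.mpr h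

lemma wlift_mem_Hmg {k k' : ℕ} (f : List G → A G)
    (hf : ∀ w : List G, w.length = k → f w ∈ Hmg (G := G) k') :
    ∀ z ∈ Hmg (G := G) k, wlift f z ∈ Hmg (G := G) k' := by
  intro z hz
  rw [mem_Hmg] at hz ⊢
  intro w hw
  have hsub : (wlift f z).support ⊆ z.support.biUnion fun v => (z v • f v).support := by
    have he : wlift f z = z.sum fun v c => c • f v := by
      rw [wlift, Finsupp.liftAddHom_apply]; rfl
    rw [he]; exact Finsupp.support_sum
  rcases Finset.mem_biUnion.mp (hsub hw) with ⟨v, hv, hwv⟩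
  have := hf v (hz v hv)
  rw [mem_Hmg] at this
  exact this w (Finsupp.support_smul hwv)

end HS
end
end IGCAux
namespace IGCAux
open Finsupp

noncomputable section
set_option linter.unusedSectionVars false

variable {G : Type*} [CommGroup G] [DecidableEq G]
variable {B : Type*} [AddCommGroup B]
variable (HS : Finset G)
variable (hmul : ∀ a ∈ HS, ∀ b ∈ HS, a * b ∈ HS)
variable (hinv : ∀ a ∈ HS, a⁻¹ ∈ HS)
variable (hsq : ∀ g : G, g * g ∈ HS)

section reindex
include hinv in
lemma sum_inv_reindex (f : G → B) : ∑ h ∈ HS, f h⁻¹ = ∑ h ∈ HS, f h :=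
  Finset.sum_nbij' (fun h => h⁻¹) (fun h => h⁻¹)
    (fun a ha => hinv a ha) (fun a ha => hinv a ha)
    (fun a _ => inv_inv a) (fun a _ => inv_inv a) (fun _ _ => rfl)

include hmul hinv in
lemma sum_mul_left_reindex {c : G} (hc : c ∈ HS) (f : G → B) :
    ∑ h ∈ HS, f (c * h) = ∑ h ∈ HS, f h :=
  Finset.sum_nbij' (fun h => c * h) (fun h => c⁻¹ * h)
    (fun a ha => hmul c hc a ha) (fun a ha => hmul c⁻¹ (hinv c hc) a ha)
    (fun a _ => by group) (fun a _ => by group) (fun _ _ => rfl)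

include hmul hinv in
lemma sum_sum_mul_collapse (f : G → B) :
    ∑ h ∈ HS, ∑ h' ∈ HS, f (h * h') = HS.card • ∑ u ∈ HS, f u := by
  rw [← Finset.sum_const]
  exact Finset.sum_congr rfl fun h hh => sum_mul_left_reindex HS hmul hinv hh f

include hmul hinv in
lemma sum_sum_mul_collapse' (f : G → B) :
    ∑ h ∈ HS, ∑ h' ∈ HS, f (h * h') = (HS.card : ℤ) • ∑ u ∈ HS, f u := by
  rw [sum_sum_mul_collapse HS hmul hinv f, natCast_zsmul]

lemma sum_constZ (x : B) : ∑ _h ∈ HS, x = (HS.card : ℤ) • x := by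
  rw [Finset.sum_const, natCast_zsmul]
end reindex

section ops

lemma consH_mem_Hmg {k : ℕ} (a : G) {z : A G} (hz : z ∈ Hmg k) :
    consH a z ∈ Hmg (G := G) (k + 1) := by
  refine wlift_mem_Hmg _ (fun w hw => ?_) z hz
  exact single_mem_Hmg' _ _ (by simp [hw])

lemma nconsH_mem_Hmg {k : ℕ} {z : A G} (hz : z ∈ Hmg k) :
    nconsH HS z ∈ Hmg (G := G) (k + 1) := by
  rw [nconsH_apply]
  exact AddSubgroup.sum_mem _ fun h _ => consH_mem_Hmg h hz

lemma cosetC_mem_Hmg {k : ℕ} (a : G) {z : A G} (hz : z ∈ Hmg k) :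
    cosetC HS a z ∈ Hmg (G := G) (k + 1) := by
  rw [cosetC_apply]
  exact AddSubgroup.sum_mem _ fun h _ => consH_mem_Hmg _ hz

lemma Lw_mem_Hmg : ∀ w : List G, Lw HS w ∈ Hmg (G := G) w.length
  | [] => single_mem_Hmg' _ _ rfl
  | a :: t => cosetC_mem_Hmg HS a (Lw_mem_Hmg t)

lemma Sw_mem_Hmg : ∀ w : List G, Sw HS w ∈ Hmg (G := G) (w.length + 1)
  | [] => by
    rw [Sw]
    exact AddSubgroup.neg_mem _ (nconsH_mem_Hmg HS (single_mem_Hmg' _ _ rfl))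
  | a :: t => by
    rw [Sw]
    exact AddSubgroup.add_mem _
      (smul_mem_Hmg _ (nconsH_mem_Hmg HS (single_mem_Hmg' _ _ (by simp))))
      (cosetC_mem_Hmg HS a (Sw_mem_Hmg t))

lemma Dw_mem_Hmg : ∀ (w : List G) (k : ℕ), w.length = k + 1 → Dw w ∈ Hmg (G := G) k
  | [], k, h => by simp at h
  | [a], k, h => by
    simp at h; subst h; rw [show Dw [a] = 0 from rfl]; exact AddSubgroup.zero_mem _
  | a :: b :: t, k, h => by
    simp at h
    rw [Dw]
    have hk : t.length + 1 = k := by omega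
    refine AddSubgroup.add_mem _ ?_ (smul_mem_Hmg _ ?_)
    · exact hk ▸ consH_mem_Hmg a (Dw_mem_Hmg (b :: t) t.length (by simp))
    · refine AddSubgroup.sub_mem _ (AddSubgroup.sub_mem _ ?_ ?_) ?_ <;>
        exact single_mem_Hmg' _ _ (by simp; omega)

/-- The key local expansion of the differential on a cons. -/
lemma dW_consH {k : ℕ} (hk : 1 ≤ k) (x : G) {z : A G} (hz : z ∈ Hmg (G := G) k) :
    dW (consH x z) = consH x (dW z) +
      ((-1 : ℤ) ^ k) • (mheadW x z - z - consH x (tailW z)) := by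
  have := eq_on_Hmg (G := G) (k := k)
    (F₁ := dW.comp (consH x))
    (F₂ := (consH x).comp dW +
      ((-1 : ℤ) ^ k) • (mheadW x - AddMonoidHom.id _ - (consH x).comp tailW))
    (fun w hw => ?_) z hz
  · simpa using this
  · have hwne : w ≠ [] := by intro h; subst h; simp at hw; omega
    simp only [AddMonoidHom.comp_apply, AddMonoidHom.add_apply, AddMonoidHom.smul_apply,
      AddMonoidHom.sub_apply, AddMonoidHom.id_apply]
    rw [consH_single, dW_single, one_smul, Dw_cons x w hwne, dW_single, one_smul,
      mheadW_single, tailW_single, consH_single, hw]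

lemma tailW_Lw (a : G) (t : List G) :
    tailW (Lw HS (a :: t)) = (HS.card : ℤ) • Lw HS t := by
  rw [Lw, cosetC_apply, map_sum]
  simp only [tailW_consH]
  exact sum_constZ HS _

lemma tailW_Sw (a : G) (t : List G) :
    tailW (Sw HS (a :: t)) =
      ((-1 : ℤ) ^ t.length * (HS.card : ℤ) ^ (t.length + 1) * HS.card) •
        Finsupp.single (a :: t) 1 + (HS.card : ℤ) • Sw HS t := by
  rw [Sw, map_add, map_zsmul, nconsH_apply, map_sum]
  simp only [tailW_consH]
  rw [sum_constZ, cosetC_apply, map_sum]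
  simp only [tailW_consH]
  rw [sum_constZ, smul_smul]

include hmul hinv in
lemma mhead_sum_Lw (a b : G) (t : List G) :
    ∑ h ∈ HS, mheadW (a * h) (Lw HS (b :: t)) = (HS.card : ℤ) • Lw HS ((a * b) :: t) := by
  have : ∀ h : G, mheadW (a * h) (Lw HS (b :: t)) =
      ∑ h' ∈ HS, consH (a * h * (b * h')) (Lw HS t) := by
    intro h
    rw [Lw, cosetC_apply, map_sum]
    exact Finset.sum_congr rfl fun h' _ => mheadW_consH _ _ _
  simp only [this]
  have key : ∀ h h' : G, a * h * (b * h') = a * b * (h * h') := fun h h' => by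
    simp [mul_comm, mul_assoc, mul_left_comm]
  simp only [key]
  rw [sum_sum_mul_collapse' HS hmul hinv (fun u => consH (a * b * u) (Lw HS t)),
    Lw, cosetC_apply]

include hmul hinv in
lemma mhead_sum_single (a : G) (w : List G) :
    ∑ h ∈ HS, mheadW (a * h) (nconsH HS (Finsupp.single w 1)) =
      (HS.card : ℤ) • cosetC HS a (Finsupp.single w 1) := by
  have : ∀ h : G, mheadW (a * h) (nconsH HS (Finsupp.single w 1)) =
      ∑ h' ∈ HS, Finsupp.single (a * h * h' :: w) 1 := by
    intro h
    rw [nconsH_apply, map_sum]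
    refine Finset.sum_congr rfl fun h' _ => ?_
    rw [consH_single, mheadW_single, mulHead, mul_assoc]
  simp only [this]
  have h2 := sum_sum_mul_collapse' HS hmul hinv
    (fun u => Finsupp.single (a * u :: w) (1 : ℤ))
  simp only [← mul_assoc] at h2
  rw [h2, cosetC_apply]
  congr 1
  refine Finset.sum_congr rfl fun h _ => ?_
  rw [consH_single]

include hmul hinv in
lemma mhead_sum_Sw (a b : G) (s : List G) :
    ∑ h ∈ HS, mheadW (a * h) (Sw HS (b :: s)) =
      ((-1 : ℤ) ^ s.length * (HS.card : ℤ) ^ (s.length + 1) * HS.card) •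
        cosetC HS a (Finsupp.single (b :: s) 1) +
      (HS.card : ℤ) • cosetC HS (a * b) (Sw HS s) := by
  have expand : ∀ h : G, mheadW (a * h) (Sw HS (b :: s)) =
      ((-1 : ℤ) ^ s.length * (HS.card : ℤ) ^ (s.length + 1)) •
        mheadW (a * h) (nconsH HS (Finsupp.single (b :: s) 1)) +
        ∑ h' ∈ HS, consH (a * b * (h * h')) (Sw HS s) := by
    intro h
    rw [Sw, map_add, map_zsmul, cosetC_apply, map_sum]
    congr 1
    refine Finset.sum_congr rfl fun h' _ => ?_
    have hgroup : a * h * (b * h') = a * b * (h * h') := by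
      simp [mul_comm, mul_assoc, mul_left_comm]
    rw [mheadW_consH, hgroup]
  simp only [expand]
  rw [Finset.sum_add_distrib, ← Finset.smul_sum, mhead_sum_single HS hmul hinv,
    sum_sum_mul_collapse' HS hmul hinv (fun u => consH (a * b * u) (Sw HS s))]
  rw [smul_smul]
  congr 1
  rw [cosetC_apply]

lemma lW_consH (a : G) (z : A G) : lW HS (consH a z) = cosetC HS a (lW HS z) := by
  induction z using Finsupp.induction with
  | zero => simp
  | single_add w c f _ _ ih =>
    calc lW HS (consH a (Finsupp.single w c + f))
        = c • Lw HS (a :: w) + cosetC HS a (lW HS f) := by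
          rw [map_add, map_add, consH_single, lW_single, ih]
      _ = cosetC HS a (lW HS (Finsupp.single w c + f)) := by
          rw [map_add (lW HS), lW_single, map_add, map_zsmul,
            show Lw HS (a :: w) = cosetC HS a (Lw HS w) from rfl]

lemma sW_consH {k : ℕ} (a : G) {z : A G} (hz : z ∈ Hmg (G := G) k) :
    sW HS (consH a z) =
      ((-1 : ℤ) ^ k * (HS.card : ℤ) ^ (k + 1)) • nconsH HS (consH a z) +
        cosetC HS a (sW HS z) := by
  have := eq_on_Hmg (G := G) (k := k)
    (F₁ := (sW HS).comp (consH a))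
    (F₂ := ((-1 : ℤ) ^ k * (HS.card : ℤ) ^ (k + 1)) • ((nconsH HS).comp (consH a)) +
      (cosetC HS a).comp (sW HS))
    (fun w hw => ?_) z hz
  · simpa using this
  · simp only [AddMonoidHom.comp_apply, AddMonoidHom.add_apply, AddMonoidHom.smul_apply]
    rw [consH_single, sW_single, one_smul, Sw, sW_single, one_smul, hw]

include hmul hinv in
lemma dW_Lw : ∀ w : List G, dW (Lw HS w) = (HS.card : ℤ) • lW HS (Dw w)
  | [] => by simp [Lw]
  | [a] => by
    rw [show Lw HS [a] = cosetC HS a (Lw HS []) from rfl, Lw, cosetC_apply, map_sum]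
    simp
  | a :: b :: s => by
    have hmem : Lw HS (b :: s) ∈ Hmg (G := G) (s.length + 1) := by
      simpa using Lw_mem_Hmg HS (b :: s)
    have hterm : ∀ h ∈ HS, dW (consH (a * h) (Lw HS (b :: s))) =
        consH (a * h) ((HS.card : ℤ) • lW HS (Dw (b :: s))) +
          ((-1 : ℤ) ^ (s.length + 1)) • mheadW (a * h) (Lw HS (b :: s)) -
          ((-1 : ℤ) ^ (s.length + 1)) • Lw HS (b :: s) -
          ((-1 : ℤ) ^ (s.length + 1)) • consH (a * h) ((HS.card : ℤ) • Lw HS s) := by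
      intro h _
      rw [dW_consH (k := s.length + 1) (by omega) (a * h) hmem, dW_Lw (b :: s),
        tailW_Lw HS b s]
      module
    rw [show Lw HS (a :: b :: s) = cosetC HS a (Lw HS (b :: s)) from rfl, cosetC_apply,
      map_sum, Finset.sum_congr rfl hterm]
    simp only [Finset.sum_sub_distrib, Finset.sum_add_distrib, ← Finset.smul_sum]
    rw [← cosetC_apply, ← cosetC_apply, mhead_sum_Lw HS hmul hinv a b s, sum_constZ]
    rw [show Dw (a :: b :: s) = consH a (Dw (b :: s)) +
        ((-1 : ℤ) ^ (s.length + 1)) •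
          (Finsupp.single ((a * b) :: s) 1 - Finsupp.single (b :: s) 1 -
            Finsupp.single (a :: s) 1) from rfl]
    simp only [map_add, map_sub, map_zsmul, lW_consH, lW_single, one_smul,
      show Lw HS (a :: s) = cosetC HS a (Lw HS s) from rfl,
      show Lw HS ((a * b) :: s) = cosetC HS (a * b) (Lw HS s) from rfl]
    module

include hinv in
lemma invW_cosetSum (a : G) (z : A G) (hz : invW z = z) (hsq' : a⁻¹ * a⁻¹ ∈ HS)
    (hmul' : ∀ x ∈ HS, ∀ y ∈ HS, x * y ∈ HS) :
    invW (cosetC HS a z) = cosetC HS a z := by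
  rw [cosetC_apply, map_sum]
  have e1 : ∀ h : G, invW (consH (a * h) z) = consH (a * h)⁻¹ z := by
    intro h; rw [invW_consH, hz]
  simp only [e1]
  have e2 : ∀ h : G, (a * h)⁻¹ = a⁻¹ * h⁻¹ := fun h => mul_inv a h
  simp only [e2]
  rw [sum_inv_reindex HS hinv (fun u => consH (a⁻¹ * u) z)]
  have e3 : ∀ h : G, a⁻¹ * h = a * (a⁻¹ * a⁻¹ * h) := fun h => by group
  calc ∑ h ∈ HS, consH (a⁻¹ * h) z = ∑ h ∈ HS, consH (a * (a⁻¹ * a⁻¹ * h)) z := by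
        simp only [← e3]
    _ = ∑ h ∈ HS, consH (a * h) z := by
        have := sum_mul_left_reindex HS hmul' hinv hsq' (fun u => consH (a * u) z)
        simpa only [mul_assoc] using this

include hmul hinv hsq in
lemma invW_Lw : ∀ w : List G, invW (Lw HS w) = Lw HS w
  | [] => by simp [Lw]
  | a :: t => by
    rw [Lw]
    exact invW_cosetSum HS hinv a _ (invW_Lw t) (by simpa using hsq a⁻¹) hmul

include hinv in
lemma invW_nconsH (z : A G) : invW (nconsH HS z) = nconsH HS (invW z) := by
  rw [nconsH_apply, nconsH_apply, map_sum]
  simp only [invW_consH]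
  exact sum_inv_reindex HS hinv (fun u => consH u (invW z))

include hmul hinv hsq in
lemma invW_cosetC (a : G) (z : A G) :
    invW (cosetC HS a z) = cosetC HS a⁻¹ (invW z) := by
  rw [cosetC_apply, cosetC_apply, map_sum]
  simp only [invW_consH]
  have e2 : ∀ h : G, (a * h)⁻¹ = a⁻¹ * h⁻¹ := fun h => mul_inv a h
  simp only [e2]
  exact sum_inv_reindex HS hinv (fun u => consH (a⁻¹ * u) (invW z))

include hmul hinv hsq in
lemma invW_Sw : ∀ w : List G, invW (Sw HS w) = Sw HS (w.map (·⁻¹))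
  | [] => by
    rw [Sw, map_neg, invW_nconsH HS hinv]
    simp [Sw]
  | a :: t => by
    rw [Sw, map_add, map_zsmul, invW_nconsH HS hinv, invW_cosetC HS hmul hinv hsq,
      invW_Sw t]
    rw [invW_single, List.map_cons]
    rw [show Sw HS (a⁻¹ :: t.map (·⁻¹)) =
      ((-1 : ℤ) ^ (t.map (·⁻¹)).length * (HS.card : ℤ) ^ ((t.map (·⁻¹)).length + 1)) •
        nconsH HS (Finsupp.single (a⁻¹ :: t.map (·⁻¹)) 1) +
        cosetC HS a⁻¹ (Sw HS (t.map (·⁻¹))) from rfl]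
    simp [List.length_map]

lemma invW_Dw : ∀ w : List G, invW (Dw w) = Dw (w.map (·⁻¹))
  | [] => by simp [show Dw ([] : List G) = 0 from rfl, show Dw (List.map _ []) = 0 from rfl]
  | [a] => by simp [show Dw [a] = 0 from rfl, show ∀ x : G, Dw [x] = 0 from fun _ => rfl]
  | a :: b :: t => by
    rw [show Dw (a :: b :: t) = consH a (Dw (b :: t)) +
      ((-1 : ℤ) ^ (t.length + 1)) •
        (Finsupp.single ((a * b) :: t) 1 - Finsupp.single (b :: t) 1 -
          Finsupp.single (a :: t) 1) from rfl]
    rw [map_add, map_zsmul, invW_consH, invW_Dw (b :: t), map_sub, map_sub]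
    simp only [invW_single, List.map_cons, mul_inv]
    rw [show Dw (a⁻¹ :: b⁻¹ :: t.map (·⁻¹)) = consH a⁻¹ (Dw (b⁻¹ :: t.map (·⁻¹))) +
      ((-1 : ℤ) ^ ((t.map (·⁻¹)).length + 1)) •
        (Finsupp.single ((a⁻¹ * b⁻¹) :: t.map (·⁻¹)) 1 -
          Finsupp.single (b⁻¹ :: t.map (·⁻¹)) 1 -
          Finsupp.single (a⁻¹ :: t.map (·⁻¹)) 1) from rfl]
    simp [List.length_map]

lemma invW_invol (z : A G) : invW (invW z) = z := by
  induction z using Finsupp.induction with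
  | zero => simp
  | single_add w c f _ _ ih =>
    rw [map_add, map_add, ih, invW_single, invW_single]
    congr 1
    rw [List.map_map]
    simp

lemma dW_invW (z : A G) : dW (invW z) = invW (dW z) := by
  induction z using Finsupp.induction with
  | zero => simp
  | single_add w c f _ _ ih =>
    rw [map_add, map_add, map_add, ih, invW_single, dW_single, dW_single]
    rw [map_add, map_zsmul, invW_Dw]

end ops
end
end IGCAux
namespace IGCAux
open Finsupp

noncomputable section
set_option linter.unusedSectionVars false
set_option maxHeartbeats 1000000

variable {G : Type*} [CommGroup G] [DecidableEq G]
variable (HS : Finset G)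
variable (hmul : ∀ a ∈ HS, ∀ b ∈ HS, a * b ∈ HS)
variable (hinv : ∀ a ∈ HS, a⁻¹ ∈ HS)

lemma nconsH_single (w : List G) :
    nconsH HS (Finsupp.single w (1 : ℤ)) = ∑ h ∈ HS, Finsupp.single (h :: w) (1 : ℤ) := by
  rw [nconsH_apply]
  exact Finset.sum_congr rfl fun h _ => consH_single h w 1

lemma cosetC_single (a : G) (w : List G) :
    cosetC HS a (Finsupp.single w (1 : ℤ)) =
      ∑ h ∈ HS, Finsupp.single ((a * h) :: w) (1 : ℤ) := by
  rw [cosetC_apply]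
  exact Finset.sum_congr rfl fun h _ => consH_single _ w 1

include hmul hinv in
/-- THE MAIN IDENTITY: the telescoping homotopy. -/
lemma dW_Sw : ∀ w : List G, dW (Sw HS w) =
    ((HS.card : ℤ) ^ (w.length + 1)) • Finsupp.single w 1 -
      (HS.card : ℤ) • Lw HS w - (HS.card : ℤ) • sW HS (Dw w)
  | [] => by
    rw [show Sw HS ([] : List G) = -(nconsH HS (Finsupp.single [] 1)) from rfl, map_neg,
      nconsH_apply, map_sum]
    simp [Lw]
  | [a] => by
    have h1 : dW (Sw HS [a]) =
        ((HS.card : ℤ)) • ∑ h ∈ HS, Dw [h, a] - ∑ h' ∈ HS, ∑ h ∈ HS, Dw [a * h', h] := by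
      rw [show Sw HS [a] = ((-1 : ℤ) ^ (List.length ([] : List G)) *
          (HS.card : ℤ) ^ (List.length ([] : List G) + 1)) •
            nconsH HS (Finsupp.single [a] 1) + cosetC HS a (Sw HS []) from rfl]
      rw [show Sw HS ([] : List G) = -(nconsH HS (Finsupp.single [] 1)) from rfl]
      simp only [List.length_nil, pow_zero, pow_one, one_mul, map_add, map_zsmul, map_neg]
      rw [nconsH_apply, nconsH_apply, cosetC_apply]
      simp only [map_sum, map_neg, consH_single, dW_single, one_smul]
      norm_num [sub_eq_add_neg]
    have hDw2 : ∀ x y : G, Dw [x, y] =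
        -(Finsupp.single [x * y] 1 - Finsupp.single [y] 1 - Finsupp.single [x] 1) := by
      intro x y
      rw [show Dw [x, y] = consH x (Dw [y]) + ((-1 : ℤ) ^ (List.length ([] : List G) + 1)) •
        (Finsupp.single [x * y] 1 - Finsupp.single [y] 1 - Finsupp.single [x] 1) from rfl]
      simp
    simp only [hDw2] at h1
    have e1 : ∑ h ∈ HS, -(Finsupp.single [h * a] 1 - Finsupp.single [a] 1 -
        Finsupp.single [h] (1 : ℤ)) =
        -(∑ h ∈ HS, Finsupp.single [a * h] 1 - (HS.card : ℤ) • Finsupp.single [a] 1 -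
          ∑ h ∈ HS, Finsupp.single [h] (1 : ℤ)) := by
      rw [Finset.sum_neg_distrib]
      congr 1
      rw [Finset.sum_sub_distrib, Finset.sum_sub_distrib, sum_constZ]
      congr 2
      exact Finset.sum_congr rfl fun h _ => by rw [mul_comm]
    have e2 : ∑ h' ∈ HS, ∑ h ∈ HS, -(Finsupp.single [a * h' * h] 1 -
        Finsupp.single [h] 1 - Finsupp.single [a * h'] (1 : ℤ)) =
        -((HS.card : ℤ) • ∑ u ∈ HS, Finsupp.single [a * u] 1 -
          (HS.card : ℤ) • ∑ h ∈ HS, Finsupp.single [h] 1 -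
          (HS.card : ℤ) • ∑ h' ∈ HS, Finsupp.single [a * h'] (1 : ℤ)) := by
      simp only [Finset.sum_neg_distrib, Finset.sum_sub_distrib]
      congr 2
      · congr 1
        · have := sum_sum_mul_collapse' HS hmul hinv
            (fun u => Finsupp.single [a * u] (1 : ℤ))
          simpa only [mul_assoc] using this
        · rw [← sum_constZ]
      · rw [← sum_constZ HS (∑ h' ∈ HS, Finsupp.single [a * h'] (1 : ℤ))]
        exact Finset.sum_comm
    rw [h1, e1, e2]
    rw [show Lw HS [a] = cosetC HS a (Lw HS []) from rfl,
      show Lw HS ([] : List G) = Finsupp.single [] 1 from rfl, cosetC_apply]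
    simp only [consH_single, Dw_singleton, map_zero, smul_zero, sub_zero, List.length_cons,
      List.length_nil, zero_add, pow_succ, pow_one]
    module
  | a :: b :: s => by
    have hDbs : Dw (b :: s) ∈ Hmg (G := G) s.length := Dw_mem_Hmg (b :: s) s.length (by simp)
    have hSbs : Sw HS (b :: s) ∈ Hmg (G := G) (s.length + 2) := by
      simpa using Sw_mem_Hmg HS (b :: s)
    have hpow2 : ((-1 : ℤ)) ^ (s.length + 2) = (-1 : ℤ) ^ s.length := by ring
    -- Piece 1 : dW of the nconsH part
    have p1 : dW (nconsH HS (Finsupp.single (a :: b :: s) 1)) =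
        nconsH HS (Dw (a :: b :: s)) +
          ((-1 : ℤ) ^ s.length) •
            (cosetC HS a (Finsupp.single (b :: s) 1) -
              (HS.card : ℤ) • Finsupp.single (a :: b :: s) 1 -
              nconsH HS (Finsupp.single (b :: s) 1)) := by
      rw [nconsH_apply, map_sum]
      have e : ∀ h ∈ HS, dW (consH h (Finsupp.single (a :: b :: s) 1)) =
          consH h (Dw (a :: b :: s)) + ((-1 : ℤ) ^ s.length) •
            (Finsupp.single ((a * h) :: b :: s) 1 - Finsupp.single (a :: b :: s) 1 -
              Finsupp.single (h :: b :: s) 1) := by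
        intro h _
        rw [consH_single, dW_single, one_smul, Dw_cons h (a :: b :: s) (by simp)]
        rw [show List.length (a :: b :: s) = s.length + 2 by simp, hpow2]
        rw [show mulHead h (a :: b :: s) = (h * a) :: b :: s from rfl,
          show (a :: b :: s : List G).tail = b :: s from rfl, mul_comm h a]
      rw [Finset.sum_congr rfl e, Finset.sum_add_distrib, ← Finset.smul_sum]
      congr 1
      · rw [nconsH_apply]
      · congr 1
        rw [Finset.sum_sub_distrib, Finset.sum_sub_distrib, sum_constZ, cosetC_single,
          nconsH_single]
    -- Piece 2 : dW of the cosetC part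
    have p2 : dW (cosetC HS a (Sw HS (b :: s))) =
        cosetC HS a (((HS.card : ℤ) ^ (s.length + 2)) • Finsupp.single (b :: s) 1 -
            (HS.card : ℤ) • Lw HS (b :: s) - (HS.card : ℤ) • sW HS (Dw (b :: s))) +
          ((-1 : ℤ) ^ s.length) •
            ((((-1 : ℤ) ^ s.length * (HS.card : ℤ) ^ (s.length + 1) * HS.card) •
                cosetC HS a (Finsupp.single (b :: s) 1) +
              (HS.card : ℤ) • cosetC HS (a * b) (Sw HS s)) -
              (HS.card : ℤ) • Sw HS (b :: s) -
              cosetC HS a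
                (((-1 : ℤ) ^ s.length * (HS.card : ℤ) ^ (s.length + 1) * HS.card) •
                    Finsupp.single (b :: s) 1 + (HS.card : ℤ) • Sw HS s)) := by
      rw [cosetC_apply, map_sum]
      have e : ∀ h ∈ HS, dW (consH (a * h) (Sw HS (b :: s))) =
          consH (a * h) (((HS.card : ℤ) ^ (s.length + 2)) • Finsupp.single (b :: s) 1 -
              (HS.card : ℤ) • Lw HS (b :: s) - (HS.card : ℤ) • sW HS (Dw (b :: s))) +
            ((-1 : ℤ) ^ s.length) •
              (mheadW (a * h) (Sw HS (b :: s)) - Sw HS (b :: s) -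
                consH (a * h)
                  (((-1 : ℤ) ^ s.length * (HS.card : ℤ) ^ (s.length + 1) * HS.card) •
                      Finsupp.single (b :: s) 1 + (HS.card : ℤ) • Sw HS s)) := by
        intro h _
        rw [dW_consH (k := s.length + 2) (by omega) (a * h) hSbs, dW_Sw (b :: s),
          tailW_Sw HS b s, hpow2]
        rw [show List.length (b :: s) = s.length + 1 by simp]
      rw [Finset.sum_congr rfl e, Finset.sum_add_distrib, ← Finset.smul_sum]
      congr 1
      · rw [cosetC_apply]
      · congr 1
        rw [Finset.sum_sub_distrib, Finset.sum_sub_distrib, sum_constZ,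
          mhead_sum_Sw HS hmul hinv a b s]
        congr 1
        rw [cosetC_apply]
    -- Assemble
    rw [show Sw HS (a :: b :: s) =
        ((-1 : ℤ) ^ (s.length + 1) * (HS.card : ℤ) ^ (s.length + 2)) •
          nconsH HS (Finsupp.single (a :: b :: s) 1) + cosetC HS a (Sw HS (b :: s)) by
      rw [show Sw HS (a :: b :: s) = ((-1 : ℤ) ^ (List.length (b :: s)) *
          (HS.card : ℤ) ^ (List.length (b :: s) + 1)) •
            nconsH HS (Finsupp.single (a :: b :: s) 1) + cosetC HS a (Sw HS (b :: s))
        from rfl]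
      rw [show List.length (b :: s) = s.length + 1 by simp]]
    rw [map_add, map_zsmul, p1, p2]
    -- expand the right-hand side
    rw [show Dw (a :: b :: s) = consH a (Dw (b :: s)) +
        ((-1 : ℤ) ^ (s.length + 1)) •
          (Finsupp.single ((a * b) :: s) 1 - Finsupp.single (b :: s) 1 -
            Finsupp.single (a :: s) 1) from rfl]
    rw [show Lw HS (a :: b :: s) = cosetC HS a (Lw HS (b :: s)) from rfl]
    simp only [map_add, map_sub, map_zsmul, sW_single, one_smul]
    rw [sW_consH HS a hDbs]
    rw [show Sw HS ((a * b) :: s) = ((-1 : ℤ) ^ s.length *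
        (HS.card : ℤ) ^ (s.length + 1)) •
          nconsH HS (Finsupp.single ((a * b) :: s) 1) + cosetC HS (a * b) (Sw HS s)
      from rfl]
    rw [show Sw HS (a :: s) = ((-1 : ℤ) ^ s.length * (HS.card : ℤ) ^ (s.length + 1)) •
          nconsH HS (Finsupp.single (a :: s) 1) + cosetC HS a (Sw HS s) from rfl]
    rw [show Sw HS (b :: s) = ((-1 : ℤ) ^ s.length * (HS.card : ℤ) ^ (s.length + 1)) •
          nconsH HS (Finsupp.single (b :: s) 1) + cosetC HS b (Sw HS s) from rfl]
    rw [show List.length (a :: b :: s) = s.length + 2 by simp]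
    simp only [pow_succ]
    rcases Nat.even_or_odd s.length with hpar | hpar
    · simp only [Even.neg_one_pow hpar]
      module
    · simp only [Odd.neg_one_pow hpar]
      module

end
end IGCAux
namespace IGCAux
open Finsupp

noncomputable section
set_option linter.unusedSectionVars false
set_option maxHeartbeats 1000000

variable {G : Type*} [CommGroup G] [DecidableEq G]
variable (HS : Finset G)
variable (hmul : ∀ a ∈ HS, ∀ b ∈ HS, a * b ∈ HS)
variable (hinv : ∀ a ∈ HS, a⁻¹ ∈ HS)
variable (hsq : ∀ g : G, g * g ∈ HS)

include hmul hinv in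
lemma dW_lW (z : A G) : dW (lW HS z) = (HS.card : ℤ) • lW HS (dW z) := by
  induction z using Finsupp.induction with
  | zero => simp
  | single_add w c f _ _ ih =>
    rw [map_add, map_add, map_add, map_add, ih, lW_single, map_zsmul, dW_Lw HS hmul hinv w,
      dW_single, map_zsmul, smul_comm, smul_add]

include hmul hinv in
lemma dW_sW {l : ℕ} {z : A G} (hz : z ∈ Hmg l) :
    dW (sW HS z) = ((HS.card : ℤ) ^ (l + 1)) • z - (HS.card : ℤ) • lW HS z -
      (HS.card : ℤ) • sW HS (dW z) := by
  have := eq_on_Hmg (G := G) (k := l)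
    (F₁ := dW.comp (sW HS))
    (F₂ := ((HS.card : ℤ) ^ (l + 1)) • AddMonoidHom.id (A G) - (HS.card : ℤ) • lW HS -
      (HS.card : ℤ) • ((sW HS).comp dW))
    (fun w hw => ?_) z hz
  · simpa using this
  · simp only [AddMonoidHom.comp_apply, AddMonoidHom.sub_apply, AddMonoidHom.smul_apply,
      AddMonoidHom.id_apply]
    rw [sW_single, one_smul, dW_Sw HS hmul hinv w, lW_single, one_smul, dW_single, one_smul,
      hw]

include hmul hinv hsq in
lemma invW_lW (z : A G) : invW (lW HS z) = lW HS z := by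
  induction z using Finsupp.induction with
  | zero => simp
  | single_add w c f _ _ ih =>
    rw [map_add, map_add, ih, lW_single, map_zsmul, invW_Lw HS hmul hinv hsq w]

include hmul hinv hsq in
lemma invW_sW (z : A G) : invW (sW HS z) = sW HS (invW z) := by
  induction z using Finsupp.induction with
  | zero => simp
  | single_add w c f _ _ ih =>
    rw [map_add, map_add, map_add, ih, sW_single, map_zsmul, invW_Sw HS hmul hinv hsq w,
      invW_single, map_add, sW_single]

lemma lW_mem_Hmg {l : ℕ} {z : A G} (hz : z ∈ Hmg l) : lW HS z ∈ Hmg (G := G) l :=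
  wlift_mem_Hmg _ (fun w hw => hw ▸ Lw_mem_Hmg HS w) z hz

lemma sW_mem_Hmg {l : ℕ} {z : A G} (hz : z ∈ Hmg l) : sW HS z ∈ Hmg (G := G) (l + 1) :=
  wlift_mem_Hmg _ (fun w hw => hw ▸ Sw_mem_Hmg HS w) z hz

lemma dW_mem_Hmg {l : ℕ} {z : A G} (hz : z ∈ Hmg (l + 1)) : dW z ∈ Hmg (G := G) l :=
  wlift_mem_Hmg _ (fun w hw => Dw_mem_Hmg w l hw) z hz

lemma invW_mem_Hmg {l : ℕ} {z : A G} (hz : z ∈ Hmg l) : invW z ∈ Hmg (G := G) l :=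
  wlift_mem_Hmg _ (fun w hw => single_mem_Hmg' _ _ (by simp [hw])) z hz

end
end IGCAux
namespace IGCAux
open Finsupp

noncomputable section
set_option linter.unusedSectionVars false
set_option maxHeartbeats 1000000

variable {G : Type*} [CommGroup G] [DecidableEq G]

/-- The word associated to a bar symbol (reversed order). -/
def toWord {l : ℕ} (g : Fin l → G) : List G := (List.ofFn g).reverse

lemma toWord_succ {l : ℕ} (g : Fin (l + 1) → G) :
    toWord g = g (Fin.last l) :: toWord (fun j => g j.castSucc) := by
  rw [toWord, List.ofFn_succ', List.concat_eq_append, List.reverse_append]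
  rfl

lemma toWord_zero (g : Fin 0 → G) : toWord g = [] := rfl

@[simp] lemma toWord_length {l : ℕ} (g : Fin l → G) : (toWord g).length = l := by
  simp [toWord]

lemma toWord_injective {l : ℕ} : Function.Injective (toWord (G := G) (l := l)) := by
  intro a b h
  have h2 : List.ofFn a = List.ofFn b := by
    have := congrArg List.reverse h
    simpa [toWord] using this
  exact List.ofFn_injective h2

lemma toWord_surj {l : ℕ} : ∀ w : List G, w.length = l → ∃ g : Fin l → G, toWord g = w := by
  induction l with
  | zero => intro w hw; exact ⟨Fin.elim0, by cases w <;> simp_all [toWord_zero]⟩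
  | succ l ih =>
    intro w hw
    match w with
    | a :: t =>
      obtain ⟨g₀, hg₀⟩ := ih t (by simpa using hw)
      refine ⟨Fin.snoc g₀ a, ?_⟩
      rw [toWord_succ, Fin.snoc_last, ← hg₀]
      exact congrArg (fun x => a :: x)
        (congrArg toWord (funext fun j => by simp))

section barFaceLemmas
open IGC

lemma barFace_lt {n : ℕ} (i : Fin (n + 2)) (g : Fin (n + 1) → G) (j : Fin n)
    (h : (j : ℕ) + 1 < (i : ℕ)) : barFace i g j = g j.castSucc := by
  rw [barFace, if_pos h]

lemma barFace_eq {n : ℕ} (i : Fin (n + 2)) (g : Fin (n + 1) → G) (j : Fin n)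
    (h : (j : ℕ) + 1 = (i : ℕ)) : barFace i g j = g j.castSucc * g j.succ := by
  rw [barFace, if_neg (by omega), if_pos h]

lemma barFace_gt {n : ℕ} (i : Fin (n + 2)) (g : Fin (n + 1) → G) (j : Fin n)
    (h : (i : ℕ) < (j : ℕ) + 1) : barFace i g j = g j.succ := by
  rw [barFace, if_neg (by omega), if_neg (by omega)]

lemma barFace_last {n : ℕ} (g : Fin (n + 1) → G) :
    barFace (Fin.last (n + 1)) g = fun j => g j.castSucc := by
  funext j
  exact barFace_lt _ g j (by simp [Fin.last]; try omega)

/-- Early faces commute with peeling the last coordinate. -/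
lemma barFace_early {l : ℕ} (i : Fin (l + 1)) (g : Fin (l + 2) → G) :
    toWord (barFace i.castSucc.castSucc g) =
      g (Fin.last (l + 1)) :: toWord (barFace i.castSucc (fun j => g j.castSucc)) := by
  have h1 : barFace i.castSucc.castSucc g (Fin.last l) = g (Fin.last (l + 1)) := by
    rw [barFace_gt _ g (Fin.last l) (by have := i.isLt; simp; try omega), Fin.succ_last]
  have h2 : (fun j : Fin l => barFace i.castSucc.castSucc g j.castSucc) =
      barFace i.castSucc (fun j => g j.castSucc) := by
    funext j
    rcases Nat.lt_trichotomy ((j : ℕ) + 1) (i : ℕ) with hj | hj | hj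
    · rw [barFace_lt _ g _ (by simpa using hj), barFace_lt _ _ j (by simpa using hj)]
    · rw [barFace_eq _ g _ (by simpa using hj), barFace_eq _ _ j (by simpa using hj),
        Fin.succ_castSucc]
    · rw [barFace_gt _ g _ (by simpa using hj), barFace_gt _ _ j (by simpa using hj),
        Fin.succ_castSucc]
  rw [toWord_succ, h1, h2]

/-- The next-to-last face merges the last two coordinates. -/
lemma barFace_merge {l : ℕ} (g : Fin (l + 2) → G) :
    toWord (barFace (Fin.last (l + 1)).castSucc g) =
      (g (Fin.last (l + 1)) * g ((Fin.last l).castSucc)) ::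
        toWord (fun j : Fin l => g j.castSucc.castSucc) := by
  have h1 : barFace (Fin.last (l + 1)).castSucc g (Fin.last l) =
      g (Fin.last (l + 1)) * g ((Fin.last l).castSucc) := by
    rw [barFace_eq _ g (Fin.last l) (by simp [Fin.last]; try omega), Fin.succ_last, mul_comm]
  have h2 : (fun j : Fin l => barFace (Fin.last (l + 1)).castSucc g j.castSucc) =
      fun j : Fin l => g j.castSucc.castSucc := by
    funext j
    rw [barFace_lt _ g _ (by simp; try omega)]
  rw [toWord_succ, h1, h2]

end barFaceLemmas

/-- The transport identity for the differential. -/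
lemma Dw_toWord : ∀ (l : ℕ) (g : Fin (l + 1) → G),
    Dw (toWord g) =
      ∑ i : Fin (l + 2), ((-1 : ℤ) ^ (i : ℕ)) • Finsupp.single (toWord (IGC.barFace i g)) 1
  | 0, g => by
    have h0 : ∀ i : Fin 2, toWord (IGC.barFace i g) = [] := fun i => rfl
    rw [toWord_succ]
    rw [show toWord (fun j : Fin 0 => g j.castSucc) = [] from rfl]
    rw [Dw_singleton]
    rw [Fin.sum_univ_two]
    simp [h0]
  | (l + 1), g => by
    have hne : toWord (fun j : Fin (l + 1) => g j.castSucc) ≠ [] := by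
      intro h
      have := congrArg List.length h
      simp at this
    set M : A G :=
      (∑ i : Fin (l + 1), ((-1 : ℤ) ^ (i : ℕ)) •
          Finsupp.single
            (g (Fin.last (l + 1)) ::
              toWord (IGC.barFace i.castSucc (fun j => g j.castSucc))) (1 : ℤ)) +
        ((-1 : ℤ) ^ (l + 1)) •
          Finsupp.single
            ((g (Fin.last (l + 1)) * g ((Fin.last l).castSucc)) ::
              toWord (fun j : Fin l => g j.castSucc.castSucc))
            (1 : ℤ) +
        ((-1 : ℤ) ^ (l + 2)) •
          Finsupp.single (toWord (fun j : Fin (l + 1) => g j.castSucc)) (1 : ℤ) with hM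
    have hR : (∑ i : Fin (l + 3), ((-1 : ℤ) ^ (i : ℕ)) •
        Finsupp.single (toWord (IGC.barFace i g)) (1 : ℤ)) = M := by
      rw [Fin.sum_univ_castSucc (n := l + 2), Fin.sum_univ_castSucc (n := l + 1)]
      have hA : ∀ i : Fin (l + 1),
          ((-1 : ℤ) ^ ((i.castSucc.castSucc : Fin (l + 3)) : ℕ)) •
              Finsupp.single (toWord (IGC.barFace i.castSucc.castSucc g)) (1 : ℤ) =
            ((-1 : ℤ) ^ (i : ℕ)) •
              Finsupp.single
                (g (Fin.last (l + 1)) ::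
                  toWord (IGC.barFace i.castSucc (fun j => g j.castSucc))) (1 : ℤ) := by
        intro i
        rw [barFace_early i g]
        simp
      rw [Finset.sum_congr rfl (fun i _ => hA i), hM]
      congr 1
      · congr 1
        rw [barFace_merge g]
        simp
      · rw [IGCAux.barFace_last]
        norm_num
    have hmh : mulHead (g (Fin.last (l + 1))) (toWord (fun j : Fin (l + 1) => g j.castSucc)) =
        (g (Fin.last (l + 1)) * g ((Fin.last l).castSucc)) ::
          toWord (fun j : Fin l => g j.castSucc.castSucc) := by
      rw [toWord_succ]
      rfl
    have hL : Dw (toWord g) = M := by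
      rw [toWord_succ g, Dw_cons _ _ hne, hmh, Dw_toWord l (fun j => g j.castSucc)]
      rw [Fin.sum_univ_castSucc (n := l + 1)]
      rw [map_add, map_sum]
      simp only [map_zsmul, consH_single, toWord_length]
      rw [show IGC.barFace (Fin.last (l + 1)) (fun j : Fin (l + 1) => g j.castSucc) =
          fun j : Fin l => g j.castSucc.castSucc from IGCAux.barFace_last _]
      rw [show (toWord (fun j : Fin (l + 1) => g j.castSucc)).tail =
          toWord (fun j : Fin l => g j.castSucc.castSucc) by
        rw [toWord_succ, List.tail_cons]]
      rw [hM]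
      have hp : ((-1 : ℤ)) ^ (l + 2) = (-1 : ℤ) ^ (l + 1) * (-1) := by ring
      rw [hp]
      simp only [Fin.coe_castSucc, Fin.val_last]
      module
    rw [hL, hR]

end
end IGCAux
namespace IGCAux
open Finsupp

noncomputable section
set_option linter.unusedSectionVars false
set_option maxHeartbeats 1000000

variable {G : Type*} [CommGroup G] [DecidableEq G]

/-- The comparison map from the bar complex to the word model. -/
def phi (l : ℕ) : IGC.C G ℤ l →+ A G :=
  Finsupp.mapDomain.addMonoidHom toWord

lemma phi_single {l : ℕ} (g : Fin l → G) (c : ℤ) :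
    phi l (Finsupp.single g c) = Finsupp.single (toWord g) c := by
  rw [phi, Finsupp.mapDomain.addMonoidHom_apply, Finsupp.mapDomain_single]

lemma phi_injective {l : ℕ} : Function.Injective (phi (G := G) l) := by
  have : ⇑(phi (G := G) l) = Finsupp.mapDomain toWord := rfl
  rw [this]
  exact Finsupp.mapDomain_injective toWord_injective

lemma phi_mem_Hmg {l : ℕ} (x : IGC.C G ℤ l) : phi l x ∈ Hmg (G := G) l := by
  rw [mem_Hmg]
  intro w hw
  have hsub : (phi l x).support ⊆ x.support.image toWord := by
    have : ⇑(phi (G := G) l) = Finsupp.mapDomain toWord := rfl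
    rw [this]
    exact Finsupp.mapDomain_support
  obtain ⟨g, _, rfl⟩ := Finset.mem_image.mp (hsub hw)
  simp

lemma phi_surj_Hmg {l : ℕ} {z : A G} (hz : z ∈ Hmg (G := G) l) :
    ∃ x : IGC.C G ℤ l, phi l x = z := by
  induction z using Finsupp.induction with
  | zero => exact ⟨0, map_zero _⟩
  | single_add w c f hwf hc ih =>
    rw [mem_Hmg] at hz
    have hsupp : (Finsupp.single w c + f).support = {w} ∪ f.support := by
      rw [Finsupp.support_add_eq, Finsupp.support_single_ne_zero _ hc]
      rw [Finsupp.support_single_ne_zero _ hc]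
      simpa using hwf
    have hwl : w.length = l := hz w (by rw [hsupp]; simp)
    have hf : f ∈ Hmg (G := G) l := mem_Hmg.mpr fun v hv => hz v (by rw [hsupp]; simp [hv])
    obtain ⟨g, hg⟩ := toWord_surj w hwl
    obtain ⟨x, hx⟩ := ih hf
    exact ⟨Finsupp.single g c + x, by rw [map_add, phi_single, hg, hx]⟩

/-- Transport of the differential. -/
lemma phi_barD {l : ℕ} (x : IGC.C G ℤ (l + 1)) :
    phi l (IGC.barD G ℤ l x) = dW (phi (l + 1) x) := by
  induction x using Finsupp.induction with
  | zero => simp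
  | single_add g c f _ _ ih =>
    rw [map_add, map_add, map_add, map_add, ih]
    congr 1
    rw [phi_single, dW_single, IGC.barD_single, map_sum, Dw_toWord l g, Finset.smul_sum]
    refine Finset.sum_congr rfl fun i _ => ?_
    rw [phi_single, Finsupp.smul_single, Finsupp.smul_single]
    congr 1
    simp only [smul_eq_mul]
    ring

lemma neg_one_units_smul (x : G) : ((-1 : ℤˣ) • x) = x⁻¹ := by
  show x ^ (((-1 : ℤˣ) : ℤ)) = x⁻¹
  simp

lemma qMap_single {l : ℕ} (q : ℤˣ) (g : Fin l → G) (c : ℤ) :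
    IGC.qMap G ℤ ℤˣ q l (Finsupp.single g c) = Finsupp.single (fun j => q • g j) c := by
  rw [IGC.qMap, IGC.chainMapOf_single]
  rfl

lemma qMap_one_apply {l : ℕ} (x : IGC.C G ℤ l) : IGC.qMap G ℤ ℤˣ 1 l x = x := by
  induction x using Finsupp.induction with
  | zero => simp
  | single_add g c f _ _ ih =>
    rw [map_add, ih, qMap_single]
    simp only [one_smul]

lemma toWord_inv {l : ℕ} (g : Fin l → G) :
    toWord (fun j => (g j)⁻¹) = (toWord g).map (·⁻¹) := by
  simp [toWord, List.map_ofFn]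
  rfl

lemma phi_qMap {l : ℕ} (x : IGC.C G ℤ l) :
    phi l (IGC.qMap G ℤ ℤˣ (-1) l x) = invW (phi l x) := by
  induction x using Finsupp.induction with
  | zero => simp
  | single_add g c f _ _ ih =>
    rw [map_add, map_add, map_add, map_add, ih, qMap_single, phi_single, phi_single,
      invW_single]
    simp only [neg_one_units_smul]
    rw [toWord_inv]

lemma qMap_neg_one_invol {l : ℕ} (x : IGC.C G ℤ l) :
    IGC.qMap G ℤ ℤˣ (-1) l (IGC.qMap G ℤ ℤˣ (-1) l x) = x := by
  induction x using Finsupp.induction with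
  | zero => simp
  | single_add g c f _ _ ih =>
    rw [map_add, map_add, ih, qMap_single, qMap_single]
    simp only [neg_one_units_smul, inv_inv]

lemma barD_qMap {l : ℕ} (q : ℤˣ) (x : IGC.C G ℤ (l + 1)) :
    IGC.barD G ℤ l (IGC.qMap G ℤ ℤˣ q (l + 1) x) = IGC.qMap G ℤ ℤˣ q l (IGC.barD G ℤ l x) := by
  have := IGC.chainMapOf_barD G ℤ (MulDistribMulAction.toMonoidHom G q) l
  have h2 := DFunLike.congr_fun this x
  simpa [IGC.qMap] using h2

lemma barD_zero_deg (x : IGC.C G ℤ 1) : IGC.barD G ℤ 0 x = 0 := by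
  induction x using Finsupp.induction with
  | zero => simp
  | single_add g c f _ _ ih =>
    rw [map_add, ih, add_zero, IGC.barD_single]
    have hface : ∀ i : Fin 2, IGC.barFace i g = IGC.barFace 0 g := fun i =>
      funext fun j => j.elim0
    rw [Fin.sum_univ_two, hface 1]
    simp

lemma qMap_deg_zero (q : ℤˣ) (x : IGC.C G ℤ 0) : IGC.qMap G ℤ ℤˣ q 0 x = x := by
  induction x using Finsupp.induction with
  | zero => simp
  | single_add g c f _ _ ih =>
    rw [map_add, ih, qMap_single,
      show (fun j : Fin 0 => q • g j) = g from funext fun j => j.elim0]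

section endgame
variable (HS : Finset G)
variable (hmul : ∀ a ∈ HS, ∀ b ∈ HS, a * b ∈ HS)
variable (hinv : ∀ a ∈ HS, a⁻¹ ∈ HS)
variable (hsq : ∀ g : G, g * g ∈ HS)
variable (hodd : Odd HS.card)

include hmul hinv hsq hodd in
/-- Workhorse 1 : an invariant cycle which is a boundary is the boundary of an
invariant chain. -/
lemma W1 {l : ℕ} (z : IGC.C G ℤ l) (hcycle : dW (phi l z) = 0)
    (hinvz : IGC.qMap G ℤ ℤˣ (-1) l z = z)
    (c : IGC.C G ℤ (l + 1)) (hb : z = IGC.barD G ℤ l c) :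
    ∃ w : IGC.C G ℤ (l + 1),
      IGC.qMap G ℤ ℤˣ (-1) (l + 1) w = w ∧ IGC.barD G ℤ l w = z := by
  classical
  set zt := phi l z with hzt
  set ct := phi (l + 1) c with hct
  have hdc : dW ct = zt := by rw [hct, ← phi_barD, ← hb]
  have h1 : dW (sW HS zt) = ((HS.card : ℤ) ^ (l + 1)) • zt - (HS.card : ℤ) • lW HS zt := by
    rw [dW_sW HS hmul hinv (phi_mem_Hmg z), hcycle, map_zero, smul_zero, sub_zero]
  have h2 : dW (lW HS ct) = (HS.card : ℤ) • lW HS zt := by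
    rw [dW_lW HS hmul hinv, hdc]
  have hVd : dW (sW HS zt + lW HS ct) = ((HS.card : ℤ) ^ (l + 1)) • zt := by
    rw [map_add, h1, h2]
    abel
  have hVmem : sW HS zt + lW HS ct ∈ Hmg (G := G) (l + 1) :=
    AddSubgroup.add_mem _ (sW_mem_Hmg HS (phi_mem_Hmg z)) (lW_mem_Hmg HS (phi_mem_Hmg c))
  have hVinv : invW (sW HS zt + lW HS ct) = sW HS zt + lW HS ct := by
    rw [map_add, invW_sW HS hmul hinv hsq, invW_lW HS hmul hinv hsq]
    congr 2
    rw [hzt, ← phi_qMap, hinvz]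
  obtain ⟨W₀, hW₀⟩ := phi_surj_Hmg hVmem
  have hW₀inv : IGC.qMap G ℤ ℤˣ (-1) (l + 1) W₀ = W₀ := by
    apply phi_injective
    rw [phi_qMap, hW₀, hVinv]
  have hW₀d : IGC.barD G ℤ l W₀ = ((HS.card : ℤ) ^ (l + 1)) • z := by
    apply phi_injective
    rw [phi_barD, hW₀, hVd, map_zsmul, hzt]
  -- two-torsion trick
  set w₂ := c + IGC.qMap G ℤ ℤˣ (-1) (l + 1) c with hw₂
  have hw₂inv : IGC.qMap G ℤ ℤˣ (-1) (l + 1) w₂ = w₂ := by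
    rw [hw₂, map_add, qMap_neg_one_invol]
    abel
  have hw₂d : IGC.barD G ℤ l w₂ = (2 : ℤ) • z := by
    rw [hw₂, map_add, barD_qMap, ← hb, hinvz, two_zsmul]
  obtain ⟨r, hr⟩ : Odd ((HS.card : ℤ) ^ (l + 1)) := Odd.pow (by exact_mod_cast hodd)
  refine ⟨W₀ - r • w₂, ?_, ?_⟩
  · rw [map_sub, map_zsmul, hW₀inv, hw₂inv]
  · rw [map_sub, map_zsmul, hW₀d, hw₂d, smul_smul]
    have : ((HS.card : ℤ) ^ (l + 1)) • z - (r * 2) • z =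
        (((HS.card : ℤ) ^ (l + 1)) - r * 2) • z := by
      rw [sub_smul]
    rw [this, hr]
    have : (2 * r + 1 - r * 2 : ℤ) = 1 := by ring
    rw [this, one_smul]

include hmul hinv hsq hodd in
/-- Workhorse 2 : a cycle invariant up to boundaries is homologous to an
invariant cycle. -/
lemma W2 {l : ℕ} (z : IGC.C G ℤ l) (hcycle : dW (phi l z) = 0)
    (c : IGC.C G ℤ (l + 1))
    (hb : IGC.qMap G ℤ ℤˣ (-1) l z - z = IGC.barD G ℤ l c) :
    ∃ z' : IGC.C G ℤ l, IGC.qMap G ℤ ℤˣ (-1) l z' = z' ∧ dW (phi l z') = 0 ∧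
      ∃ e : IGC.C G ℤ (l + 1), z - z' = IGC.barD G ℤ l e := by
  classical
  set zt := phi l z with hzt
  obtain ⟨Y, hY⟩ := phi_surj_Hmg (lW_mem_Hmg HS (phi_mem_Hmg z))
  have hYinv : IGC.qMap G ℤ ℤˣ (-1) l Y = Y := by
    apply phi_injective
    rw [phi_qMap, hY, invW_lW HS hmul hinv hsq]
  have hYcyc : dW (phi l Y) = 0 := by
    rw [hY, dW_lW HS hmul hinv, hcycle, map_zero, smul_zero]
  have hsw : dW (sW HS zt) = ((HS.card : ℤ) ^ (l + 1)) • zt - (HS.card : ℤ) • lW HS zt := by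
    rw [dW_sW HS hmul hinv (phi_mem_Hmg z), hcycle, map_zero, smul_zero, sub_zero]
  obtain ⟨E₁, hE₁⟩ := phi_surj_Hmg (sW_mem_Hmg HS (phi_mem_Hmg z))
  have hE₁d : IGC.barD G ℤ l E₁ = ((HS.card : ℤ) ^ (l + 1)) • z - (HS.card : ℤ) • Y := by
    apply phi_injective
    rw [phi_barD, hE₁, hsw, map_sub, map_zsmul, map_zsmul, hY, hzt]
  obtain ⟨r, hr⟩ : Odd ((HS.card : ℤ) ^ (l + 1)) := Odd.pow (by exact_mod_cast hodd)
  have hz1 : z = ((HS.card : ℤ) ^ (l + 1)) • z - (2 * r) • z := by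
    rw [← sub_smul, hr, show (2 * r + 1 - 2 * r : ℤ) = 1 by ring, one_smul]
  refine ⟨(HS.card : ℤ) • Y - r • (z + IGC.qMap G ℤ ℤˣ (-1) l z), ?_, ?_, ?_⟩
  · rw [map_sub, map_zsmul, map_zsmul, hYinv, map_add, qMap_neg_one_invol]
    module
  · rw [map_sub, map_zsmul, map_zsmul, map_add, phi_qMap, map_sub, map_zsmul, map_zsmul,
      map_add, hYcyc, ← hzt, hcycle, dW_invW, hcycle]
    simp
  · refine ⟨E₁ + r • c, ?_⟩
    rw [map_add, map_zsmul, hE₁d, ← hb]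
    nth_rewrite 1 [hz1]
    module

end endgame
end
end IGCAux
namespace IGCAux
open Finsupp

noncomputable section
set_option linter.unusedSectionVars false
set_option maxHeartbeats 1000000

/-- The finset of squares. -/
def sqF (G : Type*) [CommGroup G] [Fintype G] [DecidableEq G] : Finset G :=
  Finset.univ.image fun x => x * x

variable {G : Type*} [CommGroup G] [Fintype G] [DecidableEq G]

lemma sqF_sq (g : G) : g * g ∈ sqF G := Finset.mem_image.mpr ⟨g, Finset.mem_univ _, rfl⟩

lemma sqF_one : (1 : G) ∈ sqF G := by simpa using sqF_sq (1 : G)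

lemma sqF_mul : ∀ a ∈ sqF G, ∀ b ∈ sqF G, a * b ∈ sqF G := by
  intro a ha b hb
  obtain ⟨x, _, rfl⟩ := Finset.mem_image.mp ha
  obtain ⟨y, _, rfl⟩ := Finset.mem_image.mp hb
  rw [show x * x * (y * y) = (x * y) * (x * y) by
    simp [mul_comm, mul_assoc, mul_left_comm]]
  exact sqF_sq _

lemma sqF_inv : ∀ a ∈ sqF G, a⁻¹ ∈ sqF G := by
  intro a ha
  obtain ⟨x, _, rfl⟩ := Finset.mem_image.mp ha
  rw [mul_inv]
  exact sqF_sq _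

/-- For `4 ∤ n`, the number of squares in `ℤ/n` is odd. -/
lemma sqF_card_odd (n : ℕ) (hpos : 0 < n) (h4 : ¬ (4 ∣ n)) :
    haveI : NeZero n := ⟨hpos.ne'⟩
    Odd (sqF (Multiplicative (ZMod n))).card := by
  haveI : NeZero n := ⟨hpos.ne'⟩
  have hcard : (sqF (Multiplicative (ZMod n))).card =
      (Finset.univ.image fun x : ZMod n => x + x).card := by
    apply Finset.card_bij (fun g _ => Multiplicative.toAdd g)
    · intro g hg
      obtain ⟨x, _, rfl⟩ := Finset.mem_image.mp hg
      exact Finset.mem_image.mpr ⟨Multiplicative.toAdd x, Finset.mem_univ _, by simp⟩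
    · intro a _ b _ h
      exact Multiplicative.toAdd.injective h
    · intro y hy
      obtain ⟨x, _, rfl⟩ := Finset.mem_image.mp hy
      exact ⟨Multiplicative.ofAdd (x + x),
        Finset.mem_image.mpr ⟨Multiplicative.ofAdd x, Finset.mem_univ _, rfl⟩, by simp⟩
  rcases Nat.even_or_odd n with hn2 | hn2
  · -- n even, so n/2 is odd
    have hn2' : n % 2 = 0 := Nat.even_iff.mp hn2
    have h4' : ¬ (n % 4 = 0) := fun h => h4 (Nat.dvd_of_mod_eq_zero h)
    obtain ⟨u, hn2u⟩ : ∃ u, n = 2 * u := ⟨n / 2, by omega⟩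
    have hupos : 0 < u := by omega
    have hS : (Finset.univ.image fun x : ZMod n => x + x) =
        (Finset.range u).image (fun k => ((2 * k : ℕ) : ZMod n)) := by
      ext y
      simp only [Finset.mem_image, Finset.mem_univ, true_and, Finset.mem_range]
      constructor
      · rintro ⟨x, rfl⟩
        refine ⟨x.val % u, Nat.mod_lt _ hupos, ?_⟩
        have hx : ((x.val : ℕ) : ZMod n) = x := ZMod.natCast_rightInverse x
        have key : (2 * (x.val % u) + n * (x.val / u) : ℕ) = 2 * x.val := by
          generalize x.val = v
          calc 2 * (v % u) + n * (v / u)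
              = 2 * (v % u) + 2 * u * (v / u) := by rw [hn2u]
            _ = 2 * (v % u + u * (v / u)) := by ring
            _ = 2 * v := by rw [Nat.mod_add_div]
        have : ((2 * (x.val % u) : ℕ) : ZMod n) = ((2 * x.val : ℕ) : ZMod n) := by
          rw [← key]
          push_cast [ZMod.natCast_self]
          ring
        rw [this]
        push_cast [hx]
        ring
      · rintro ⟨k, _, rfl⟩
        exact ⟨(k : ZMod n), by push_cast; ring⟩
    rw [hcard, hS, Finset.card_image_of_injOn, Finset.card_range]
    · exact Nat.odd_iff.mpr (by omega)
    · intro k₁ h₁ k₂ h₂ he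
      simp only [Finset.coe_range, Set.mem_Iio] at h₁ h₂
      have e1 : ((2 * k₁ : ℕ) : ZMod n).val = 2 * k₁ := ZMod.val_cast_of_lt (by omega)
      have e2 : ((2 * k₂ : ℕ) : ZMod n).val = 2 * k₂ := ZMod.val_cast_of_lt (by omega)
      have := congrArg ZMod.val he
      rw [e1, e2] at this
      omega
  · -- n odd : every element is a double
    have hn2' : n % 2 = 1 := Nat.odd_iff.mp hn2
    have hS : (Finset.univ.image fun x : ZMod n => x + x) = Finset.univ := by
      apply Finset.eq_univ_of_forall
      intro y
      refine Finset.mem_image.mpr ⟨(((n + 1) / 2 : ℕ) : ZMod n) * y, Finset.mem_univ _, ?_⟩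
      rw [← add_mul, ← Nat.cast_add, show (n + 1) / 2 + (n + 1) / 2 = n + 1 by omega]
      push_cast [ZMod.natCast_self]
      ring
    rw [hcard, hS, Finset.card_univ, ZMod.card]
    exact hn2

end
end IGCAux
namespace IGCAux
open Finsupp

noncomputable section
set_option linter.unusedSectionVars false
set_option maxHeartbeats 1000000

variable {G : Type*} [CommGroup G] [DecidableEq G]

lemma dW_Hmg0 {z : A G} (hz : z ∈ Hmg (G := G) 0) : dW z = 0 := by
  have := eq_on_Hmg (G := G) (k := 0) (F₁ := dW) (F₂ := 0) (fun w hw => ?_) z hz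
  · simpa using this
  · obtain rfl : w = [] := List.length_eq_zero_iff.mp hw
    simp

lemma cycles_iff_dW {k : ℕ} (z : IGC.C G ℤ k) :
    z ∈ IGC.cycles G ℤ k ↔ dW (phi k z) = 0 := by
  cases k with
  | zero =>
    constructor
    · intro _
      exact dW_Hmg0 (phi_mem_Hmg z)
    · intro _
      show z ∈ (IGC.barDFrom G ℤ 0).ker
      rw [show IGC.barDFrom G ℤ 0 = 0 from rfl]
      simp [AddMonoidHom.mem_ker]
  | succ j =>
    show z ∈ (IGC.barD G ℤ j).ker ↔ _
    rw [AddMonoidHom.mem_ker]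
    constructor
    · intro h
      rw [← phi_barD, h, map_zero]
    · intro h
      apply phi_injective (l := j)
      rw [phi_barD, h, map_zero]

lemma mem_invC_iff {k : ℕ} (z : IGC.C G ℤ k) :
    z ∈ IGC.invC G ℤ ℤˣ k ↔ IGC.qMap G ℤ ℤˣ (-1) k z = z := by
  rw [IGC.invC, AddSubgroup.mem_iInf]
  constructor
  · intro h
    have h2 := h (-1)
    rwa [AddMonoidHom.mem_ker, AddMonoidHom.sub_apply, AddMonoidHom.id_apply,
      sub_eq_zero] at h2
  · intro h q
    rw [AddMonoidHom.mem_ker, AddMonoidHom.sub_apply, AddMonoidHom.id_apply, sub_eq_zero]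
    rcases Int.units_eq_one_or q with rfl | rfl
    · exact qMap_one_apply z
    · exact h

section keys
variable (HS : Finset G)
variable (hmul : ∀ a ∈ HS, ∀ b ∈ HS, a * b ∈ HS)
variable (hinv : ∀ a ∈ HS, a⁻¹ ∈ HS)
variable (hsq : ∀ g : G, g * g ∈ HS)
variable (hodd : Odd HS.card)

include hmul hinv hsq hodd in
lemma KEY1 {k : ℕ} (z : IGC.C G ℤ k) (hz : z ∈ IGC.cycles G ℤ k)
    (hzi : z ∈ IGC.invC G ℤ ℤˣ k) (hzb : z ∈ IGC.boundaries G ℤ k) :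
    z ∈ IGC.invBoundaries G ℤ ℤˣ k := by
  obtain ⟨c, hc⟩ := hzb
  obtain ⟨w, hw1, hw2⟩ := W1 HS hmul hinv hsq hodd z ((cycles_iff_dW z).mp hz)
    ((mem_invC_iff z).mp hzi) c hc.symm
  exact AddSubgroup.mem_map.mpr ⟨w, (mem_invC_iff w).mpr hw1, hw2⟩

include hmul hinv hsq hodd in
lemma KEY2 {k : ℕ} (z : IGC.C G ℤ k) (hz : z ∈ IGC.cycles G ℤ k)
    (hzb : IGC.qMap G ℤ ℤˣ (-1) k z - z ∈ IGC.boundaries G ℤ k) :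
    ∃ z', z' ∈ IGC.invC G ℤ ℤˣ k ∧ z' ∈ IGC.cycles G ℤ k ∧
      z - z' ∈ IGC.boundaries G ℤ k := by
  obtain ⟨c, hc⟩ := hzb
  obtain ⟨z', h1, h2, e, he⟩ := W2 HS hmul hinv hsq hodd z ((cycles_iff_dW z).mp hz) c hc.symm
  exact ⟨z', (mem_invC_iff z').mpr h1, (cycles_iff_dW z').mpr h2, ⟨e, he.symm⟩⟩

end keys
end
end IGCAux
/-- if `n` is a positive integer with `n ≢ 0 mod 4`, then the natural map
`i_* : H_*^{ℤ/2}(ℤ/n;ℤ) → H_*(ℤ/n;ℤ)^{ℤ/2}` is an isomorphism, where `ℤ/2 = ℤˣ` acts by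
negation. -/
theorem stmt14 (n : ℕ) (hpos : 0 < n) (h4 : ¬ (4 ∣ n)) (l : ℕ) :
    Function.Injective (IGC.inclHom (Multiplicative (ZMod n)) ℤ ℤˣ l) ∧
      (IGC.inclHom (Multiplicative (ZMod n)) ℤ ℤˣ l).range =
        IGC.invariantClasses (Multiplicative (ZMod n)) ℤ ℤˣ l := by
  haveI : NeZero n := ⟨hpos.ne'⟩
  classical
  have hmul := IGCAux.sqF_mul (G := Multiplicative (ZMod n))
  have hinv := IGCAux.sqF_inv (G := Multiplicative (ZMod n))
  have hsq := IGCAux.sqF_sq (G := Multiplicative (ZMod n))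
  have hodd := IGCAux.sqF_card_odd n hpos h4
  constructor
  · rw [injective_iff_map_eq_zero]
    intro a
    refine QuotientAddGroup.induction_on a ?_
    intro x hx
    rw [IGC.inclHom, QuotientAddGroup.map_mk, QuotientAddGroup.eq_zero_iff,
      AddSubgroup.mem_addSubgroupOf, AddSubgroup.coe_inclusion] at hx
    have hxi := (AddSubgroup.mem_inf.mp x.2).1
    have hxc := (AddSubgroup.mem_inf.mp x.2).2
    have hib := IGCAux.KEY1 _ hmul hinv hsq hodd _ hxc hxi hx
    rw [QuotientAddGroup.eq_zero_iff, AddSubgroup.mem_addSubgroupOf]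
    exact hib
  · ext c0
    constructor
    · rintro ⟨a, rfl⟩
      refine QuotientAddGroup.induction_on a ?_
      intro x
      rw [IGC.inclHom, QuotientAddGroup.map_mk, IGC.invariantClasses]
      refine AddSubgroup.mem_map.mpr ⟨AddSubgroup.inclusion (show IGC.invCycles (Multiplicative (ZMod n)) ℤ ℤˣ l ≤ IGC.cycles (Multiplicative (ZMod n)) ℤ l from inf_le_right) x, ?_, rfl⟩
      rw [AddSubgroup.mem_addSubgroupOf, AddSubgroup.coe_inclusion, AddSubgroup.mem_iInf]
      intro q
      rw [AddSubgroup.mem_comap]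
      have hxi := (AddSubgroup.mem_inf.mp x.2).1
      rcases Int.units_eq_one_or q with rfl | rfl
      · have h0 : (IGC.qMap (Multiplicative (ZMod n)) ℤ ℤˣ 1 l -
            AddMonoidHom.id (IGC.C (Multiplicative (ZMod n)) ℤ l))
            (↑x : IGC.C (Multiplicative (ZMod n)) ℤ l) = 0 := by
          rw [AddMonoidHom.sub_apply, AddMonoidHom.id_apply, IGCAux.qMap_one_apply,
            sub_self]
        rw [h0]
        exact AddSubgroup.zero_mem _
      · have h0 : (IGC.qMap (Multiplicative (ZMod n)) ℤ ℤˣ (-1) l -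
            AddMonoidHom.id (IGC.C (Multiplicative (ZMod n)) ℤ l))
            (↑x : IGC.C (Multiplicative (ZMod n)) ℤ l) = 0 := by
          rw [AddMonoidHom.sub_apply, AddMonoidHom.id_apply,
            (IGCAux.mem_invC_iff _).mp hxi, sub_self]
        rw [h0]
        exact AddSubgroup.zero_mem _
    · intro hc
      rw [IGC.invariantClasses] at hc
      obtain ⟨y, hy, rfl⟩ := AddSubgroup.mem_map.mp hc
      rw [AddSubgroup.mem_addSubgroupOf, AddSubgroup.mem_iInf] at hy
      have hyT := hy (-1)
      rw [AddSubgroup.mem_comap, AddMonoidHom.sub_apply, AddMonoidHom.id_apply] at hyT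
      obtain ⟨z', hz'i, hz'c, hz'b⟩ := IGCAux.KEY2 _ hmul hinv hsq hodd _ y.2 hyT
      refine ⟨QuotientAddGroup.mk
        (⟨z', AddSubgroup.mem_inf.mpr ⟨hz'i, hz'c⟩⟩ :
          IGC.invCycles (Multiplicative (ZMod n)) ℤ ℤˣ l), ?_⟩
      rw [IGC.inclHom, QuotientAddGroup.map_mk]
      show _ = QuotientAddGroup.mk' _ y
      rw [QuotientAddGroup.mk'_apply]
      rw [QuotientAddGroup.eq, AddSubgroup.mem_addSubgroupOf, AddSubgroup.coe_add,
        AddSubgroup.coe_neg, AddSubgroup.coe_inclusion, neg_add_eq_sub]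
      exact hz'b
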